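/- Let n ≥ 1, let V ⊆ ℝ^{2n} be open, let F : V → ℝ be C², and let L : V → ℝ^{2n} × ℝ^{2n} be the Lagrangian lift L(x) = (x, Y_F(x)). Then for every x ∈ V, the following are equivalent: (a) L pulls back Ω₁ to zero at x, i.e. Ω₁((u, DY_F(x)u), (v, DY_F(x)v)) = 0 for all u, v ∈ ℝ^{2n}; (b) (DY_F(x))² = I_{2n}. (This is the analytic content of the theorem that the solutions of the exterior differential system {Ω, Ω₁} are exactly the center-chord improper affine spheres.) -/

import Mathlib

open Matrix

/-- The standard symplectic form on `ℝ^{2n}`, indexed by `Fin n ⊕ Fin n`. -/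
noncomputable def sform (n : ℕ) (u v : Fin n ⊕ Fin n → ℝ) : ℝ :=
  ∑ i : Fin n, (u (Sum.inl i) * v (Sum.inr i) - u (Sum.inr i) * v (Sum.inl i))

/-- The Hamiltonian vector field of `F`. -/
noncomputable def hamVF (n : ℕ) (F : (Fin n ⊕ Fin n → ℝ) → ℝ) (x : Fin n ⊕ Fin n → ℝ) :
    Fin n ⊕ Fin n → ℝ :=
  Sum.elim (fun i => -(fderiv ℝ F x (Pi.single (Sum.inr i) 1)))
    (fun i => fderiv ℝ F x (Pi.single (Sum.inl i) 1))

/-- The Jacobian matrix of a map between finite-dimensional coordinate spaces. -/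
noncomputable def jacM {ι κ : Type*} [Fintype ι] [DecidableEq ι] [Fintype κ]
    (g : (ι → ℝ) → (κ → ℝ)) (r : ι → ℝ) : Matrix κ ι ℝ :=
  Matrix.of fun i j => fderiv ℝ g r (Pi.single j 1) i

/-- The form `Ω₁((u,a),(v,b)) = ω(u,v) + ω(a,b)` on `ℝ^{2n} × ℝ^{2n}`. -/
noncomputable def Omega1Form (n : ℕ)
    (w w' : (Fin n ⊕ Fin n → ℝ) × (Fin n ⊕ Fin n → ℝ)) : ℝ :=
  sform n w.1 w'.1 + sform n w.2 w'.2

-- the K matrix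
noncomputable def Kmat (n : ℕ) : Matrix (Fin n ⊕ Fin n) (Fin n ⊕ Fin n) ℝ :=
  Matrix.fromBlocks 0 (-1) 1 0

lemma Kmat_sq (n : ℕ) : Kmat n * Kmat n = -1 := by
  simp [Kmat, Matrix.fromBlocks_multiply, ← Matrix.fromBlocks_one,
    Matrix.fromBlocks_neg]

lemma Kmat_transpose (n : ℕ) : (Kmat n)ᵀ = -(Kmat n) := by
  simp [Kmat, Matrix.fromBlocks_transpose, Matrix.fromBlocks_neg]

lemma sform_eq (n : ℕ) (u v : Fin n ⊕ Fin n → ℝ) :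
    sform n u v = u ⬝ᵥ ((-(Kmat n)) *ᵥ v) := by
  simp only [sform, Kmat, dotProduct, Matrix.mulVec, Fintype.sum_sum_type,
    Matrix.fromBlocks, Matrix.neg_apply, Matrix.of_apply, Sum.elim_inl, Sum.elim_inr,
    Matrix.zero_apply, Matrix.one_apply, Matrix.neg_apply, Pi.neg_apply, neg_neg, neg_zero,
    ite_mul, one_mul, zero_mul, mul_ite, mul_one, mul_zero, Finset.sum_ite_eq,
    Finset.mem_univ, if_true, Finset.sum_sub_distrib, Finset.sum_neg_distrib, Finset.sum_add_distrib,
    Finset.sum_const_zero, zero_add, add_zero, neg_mul, mul_neg, Finset.sum_neg_distrib]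
  ring

-- matrix algebra lemma
lemma key_alg {m : Type*} [Fintype m] [DecidableEq m]
    (K M B : Matrix m m ℝ) (hK2 : K * K = -1) (hKt : Kᵀ = -K) (hMt : Mᵀ = M)
    (hB : B = K * M) :
    ((-K) + Bᵀ * (-K) * B = 0) ↔ B * B = 1 := by
  have hBt : Bᵀ = -(M * K) := by
    rw [hB, Matrix.transpose_mul, hMt, hKt]; noncomm_ring
  have h1 : Bᵀ * (-K) * B = -(M * K * M) := by
    rw [hBt, hB]
    have : M * (K * (K * (K * M))) = -(M * K * M) := by
      rw [show K * (K * (K * M)) = (K * K) * (K * M) by noncomm_ring, hK2]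
      noncomm_ring
    calc -(M * K) * -K * (K * M) = M * (K * (K * (K * M))) := by noncomm_ring
      _ = -(M * K * M) := this
  rw [h1, show -K + -(M * K * M) = -(K + M * K * M) by abel, neg_eq_zero]
  constructor
  · intro h
    have hMKM : M * K * M = -K := by
      have h2 : -K = M * K * M := add_eq_zero_iff_neg_eq.mp h
      exact h2.symm
    rw [hB, show K * M * (K * M) = K * (M * K * M) by noncomm_ring, hMKM,
      show K * -K = -(K*K) by noncomm_ring, hK2, neg_neg]
  · intro h
    have h2 : K * (M * K * M) = 1 := by
      rw [show K * (M * K * M) = (K * M) * (K * M) by noncomm_ring, ← hB, h]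
    have h3 : M * K * M = -K := by
      have h4 := congrArg (fun A => (-K) * A) h2
      rw [show (-K) * (K * (M * K * M)) = (-(K*K)) * (M * K * M) by noncomm_ring, hK2,
        neg_neg, one_mul] at h4
      rw [h4]; simp
    rw [h3]; simp

theorem stmt18 (n : ℕ) (hn : 1 ≤ n) (V : Set (Fin n ⊕ Fin n → ℝ)) (hV : IsOpen V)
    (F : (Fin n ⊕ Fin n → ℝ) → ℝ) (hF : ContDiffOn ℝ 2 F V) :
    ∀ x ∈ V,
      ((∀ u v : Fin n ⊕ Fin n → ℝ,
        Omega1Form n (u, (jacM (hamVF n F) x).mulVec u)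
          (v, (jacM (hamVF n F) x).mulVec v) = 0) ↔
      jacM (hamVF n F) x * jacM (hamVF n F) x = 1) := by
  intro x hx
  have hxn : V ∈ nhds x := hV.mem_nhds hx
  have hFx : ContDiffAt ℝ 2 F x := hF.contDiffAt hxn
  have hF1 : ContDiffAt ℝ 1 (fderiv ℝ F) x := hFx.fderiv_right (by norm_num)
  have hFd : DifferentiableAt ℝ (fderiv ℝ F) x := hF1.differentiableAt (by norm_num)
  -- second derivative matrix
  set D := fderiv ℝ (fderiv ℝ F) x with hD
  set M : Matrix (Fin n ⊕ Fin n) (Fin n ⊕ Fin n) ℝ :=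
    Matrix.of (fun i j => D (Pi.single j 1) (Pi.single i 1)) with hM
  have hsymm : IsSymmSndFDerivAt ℝ F x := hFx.isSymmSndFDerivAt (by norm_num)
  have hMt : Mᵀ = M := by
    ext i j
    exact hsymm.eq (Pi.single i 1) (Pi.single j 1)
  -- derivative of components
  have hcomp : ∀ e : Fin n ⊕ Fin n → ℝ,
      fderiv ℝ (fun y => fderiv ℝ F y e) x = (D.flip) e := by
    intro e
    have := fderiv_clm_apply (c := fderiv ℝ F) (u := fun _ => e) hFd
      (differentiableAt_const e)
    simpa using this
  have hdiff : ∀ i, DifferentiableAt ℝ (fun y => hamVF n F y i) x := by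
    intro i
    have hde : ∀ e : Fin n ⊕ Fin n → ℝ, DifferentiableAt ℝ (fun y => fderiv ℝ F y e) x := by
      intro e
      exact (ContinuousLinearMap.apply ℝ ℝ e).differentiableAt.comp x hFd
    cases i with
    | inl a => exact (hde (Pi.single (Sum.inr a) 1)).neg
    | inr a => exact hde (Pi.single (Sum.inl a) 1)
  have hfd : fderiv ℝ (hamVF n F) x =
      ContinuousLinearMap.pi (fun i => fderiv ℝ (fun y => hamVF n F y i) x) := by
    have : hamVF n F = fun y i => hamVF n F y i := rfl
    rw [this]
    exact fderiv_pi hdiff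
  have hB : jacM (hamVF n F) x = Kmat n * M := by
    ext i j
    have hij : fderiv ℝ (hamVF n F) x (Pi.single j 1) i
        = fderiv ℝ (fun y => hamVF n F y i) x (Pi.single j 1) := by
      rw [hfd]; rfl
    cases i with
    | inl a =>
      have : (fun y => hamVF n F y (Sum.inl a))
          = fun y => -(fderiv ℝ F y (Pi.single (Sum.inr a) 1)) := rfl
      simp only [jacM, Matrix.of_apply, hij, this]
      rw [fderiv_fun_neg, hcomp]
      simp [Kmat, Matrix.mul_apply, Fintype.sum_sum_type, Matrix.fromBlocks, hM,
        ContinuousLinearMap.flip_apply, Matrix.one_apply, ite_mul, one_mul, zero_mul,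
        Finset.sum_ite_eq]
    | inr a =>
      have : (fun y => hamVF n F y (Sum.inr a))
          = fun y => fderiv ℝ F y (Pi.single (Sum.inl a) 1) := rfl
      simp only [jacM, Matrix.of_apply, hij, this]
      rw [hcomp]
      simp [Kmat, Matrix.mul_apply, Fintype.sum_sum_type, Matrix.fromBlocks, hM,
        ContinuousLinearMap.flip_apply, Matrix.one_apply, ite_mul, one_mul, zero_mul,
        Finset.sum_ite_eq]
  set B := jacM (hamVF n F) x with hBd
  have hform : ∀ u v : Fin n ⊕ Fin n → ℝ,
      Omega1Form n (u, B *ᵥ u) (v, B *ᵥ v)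
        = u ⬝ᵥ (((-(Kmat n)) + Bᵀ * (-(Kmat n)) * B) *ᵥ v) := by
    intro u v
    simp only [Omega1Form, sform_eq]
    rw [Matrix.add_mulVec, dotProduct_add]
    congr 1
    have hswap : ∀ z, (B *ᵥ u) ⬝ᵥ z = u ⬝ᵥ (Bᵀ *ᵥ z) := fun z => by
      rw [Matrix.dotProduct_mulVec, Matrix.vecMul_transpose]
    rw [hswap]
    simp [Matrix.mulVec_mulVec, Matrix.mul_assoc]
  constructor
  · intro h
    rw [← key_alg (Kmat n) M B (Kmat_sq n) (Kmat_transpose n) hMt hB]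
    ext i j
    have := h (Pi.single i 1) (Pi.single j 1)
    rw [hform] at this
    simpa [Matrix.mulVec_single, Pi.single_apply, dotProduct] using this
  · intro h
    intro u v
    rw [hform, (key_alg (Kmat n) M B (Kmat_sq n) (Kmat_transpose n) hMt hB).mpr h]
    simp
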